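/- Let v1, v2, v3, v4, v5 be five points of ℝ³ in general position (every four of them affinely independent) satisfying: v5 and v4 lie strictly on opposite sides of the plane through v1, v2, v3; v5 and v3 lie strictly on opposite sides of the plane through v1, v2, v4; v5 and v2 lie strictly on opposite sides of the plane through v1, v3, v4; and v5 and v1 lie strictly on the same side of the plane through v2, v3, v4. Then v1 lies in the interior of the convex hull of {v2, v3, v4, v5}; that is, v1 ∈ interior (convexHull ℝ {v2,v3,v4,v5}). -/

import Mathlib

open Finset AffineSubspace

local notation "E3" => EuclideanSpace ℝ (Fin 3)

private lemma realSameRay_pos {a b : ℝ} (h : SameRay ℝ a b) (ha : a ≠ 0) (hb : b ≠ 0) :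
    0 < a * b := by
  rcases h with h | h | ⟨r₁, r₂, hr₁, hr₂, heq⟩
  · exact absurd h ha
  · exact absurd h hb
  · simp only [smul_eq_mul] at heq
    have hb2 : 0 < b * b := mul_self_pos.mpr hb
    have key : r₁ * (a * b) = r₂ * (b * b) := by rw [← mul_assoc, heq]; ring
    nlinarith [mul_pos hr₂ hb2]

private lemma sOppSide_sign {f : E3 →ᵃ[ℝ] ℝ} {s : AffineSubspace ℝ E3}
    (hmem : ∀ z, z ∈ s ↔ f z = 0) {x y : E3} (h : s.SOppSide x y) :
    f x * f y < 0 := by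
  obtain ⟨⟨p₁, hp₁, p₂, hp₂, hray⟩, hx, hy⟩ := h
  have hfx : f x ≠ 0 := fun h0 => hx ((hmem x).mpr h0)
  have hfy : f y ≠ 0 := fun h0 => hy ((hmem y).mpr h0)
  have hr := (hray.map f.linear)
  rw [f.linearMap_vsub, f.linearMap_vsub, (hmem p₁).mp hp₁, (hmem p₂).mp hp₂] at hr
  simp only [vsub_eq_sub, sub_zero, zero_sub] at hr
  have := realSameRay_pos hr hfx (neg_ne_zero.mpr hfy)
  nlinarith

private lemma sSameSide_sign {f : E3 →ᵃ[ℝ] ℝ} {s : AffineSubspace ℝ E3}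
    (hmem : ∀ z, z ∈ s ↔ f z = 0) {x y : E3} (h : s.SSameSide x y) :
    0 < f x * f y := by
  obtain ⟨⟨p₁, hp₁, p₂, hp₂, hray⟩, hx, hy⟩ := h
  have hfx : f x ≠ 0 := fun h0 => hx ((hmem x).mpr h0)
  have hfy : f y ≠ 0 := fun h0 => hy ((hmem y).mpr h0)
  have hr := (hray.map f.linear)
  rw [f.linearMap_vsub, f.linearMap_vsub, (hmem p₁).mp hp₁, (hmem p₂).mp hp₂] at hr
  simp only [vsub_eq_sub, sub_zero] at hr
  exact realSameRay_pos hr hfx hfy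

private lemma mem_span_iff_coord_zero (B : AffineBasis (Fin 4) ℝ E3) (i : Fin 4) (z : E3) :
    z ∈ affineSpan ℝ (⇑B '' {j | j ≠ i}) ↔ B.coord i z = 0 := by
  classical
  constructor
  · intro hz
    have hle : affineSpan ℝ (⇑B '' {j | j ≠ i}) ≤
        AffineSubspace.comap (B.coord i) (affineSpan ℝ ({0} : Set ℝ)) := by
      refine affineSpan_le.mpr ?_
      rintro _ ⟨j, hj, rfl⟩
      simp only [AffineSubspace.mem_coe, AffineSubspace.mem_comap]
      rw [B.coord_apply_ne (Ne.symm hj)]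
      exact mem_affineSpan ℝ rfl
    have h2 := hle hz
    rw [AffineSubspace.mem_comap,
      AffineSubspace.mem_affineSpan_singleton] at h2
    exact h2
  · intro hz
    have hsum : ∑ j ∈ univ.erase i, B.coord j z = 1 := by
      rw [Finset.sum_erase _ (by simp [hz])]
      exact B.sum_coord_apply_eq_one z
    have hmemerase : ∀ x : Fin 4, x ∈ univ.erase i ↔ x ≠ i := by
      intro x; simp [Finset.mem_erase]
    have hsum' : ∑ j : {j : Fin 4 // j ≠ i}, B.coord j.1 z = 1 := by
      rw [← Finset.sum_subtype (univ.erase i) hmemerase (fun j => B.coord j z)]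
      exact hsum
    have hmem := _root_.affineCombination_mem_affineSpan (k := ℝ) hsum'
      (fun j : {j : Fin 4 // j ≠ i} => B j.1)
    have hrange : Set.range (fun j : {j : Fin 4 // j ≠ i} => B j.1) = ⇑B '' {j | j ≠ i} := by
      ext x
      constructor
      · rintro ⟨j, rfl⟩; exact ⟨j.1, j.2, rfl⟩
      · rintro ⟨j, hj, rfl⟩; exact ⟨⟨j, hj⟩, rfl⟩
    have hcomb : Finset.univ.affineCombination ℝ
        (fun j : {j : Fin 4 // j ≠ i} => B j.1) (fun j => B.coord j.1 z) = z := by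
      rw [Finset.univ.affineCombination_eq_linear_combination _ _ hsum']
      rw [← Finset.sum_subtype (univ.erase i) hmemerase (fun j => B.coord j z • B j)]
      rw [Finset.sum_erase _ (by simp [hz])]
      have := B.affineCombination_coord_eq_self z
      rwa [Finset.univ.affineCombination_eq_linear_combination _ _
        (B.sum_coord_apply_eq_one z)] at this
    rw [hcomb, hrange] at hmem
    exact hmem


/-- Case (d) of the classification of linear embeddings of K₅: if `v₅` lies strictly
outside the three faces of the tetrahedron ⟨v₁,v₂,v₃,v₄⟩ containing `v₁` and strictly
inside the half-space of the face ⟨v₂,v₃,v₄⟩, then `v₁` lies inside the tetrahedron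
⟨v₂,v₃,v₄,v₅⟩. -/
theorem vertex_inside_tetrahedron_case_d
    (v₁ v₂ v₃ v₄ v₅ : EuclideanSpace ℝ (Fin 3))
    (h₁₂₃₄ : AffineIndependent ℝ ![v₁, v₂, v₃, v₄])
    (h₁₂₃₅ : AffineIndependent ℝ ![v₁, v₂, v₃, v₅])
    (h₁₂₄₅ : AffineIndependent ℝ ![v₁, v₂, v₄, v₅])
    (h₁₃₄₅ : AffineIndependent ℝ ![v₁, v₃, v₄, v₅])
    (h₂₃₄₅ : AffineIndependent ℝ ![v₂, v₃, v₄, v₅])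
    (hA : (affineSpan ℝ ({v₁, v₂, v₃} : Set (EuclideanSpace ℝ (Fin 3)))).SOppSide v₅ v₄)
    (hB : (affineSpan ℝ ({v₁, v₂, v₄} : Set (EuclideanSpace ℝ (Fin 3)))).SOppSide v₅ v₃)
    (hC : (affineSpan ℝ ({v₁, v₃, v₄} : Set (EuclideanSpace ℝ (Fin 3)))).SOppSide v₅ v₂)
    (hD : (affineSpan ℝ ({v₂, v₃, v₄} : Set (EuclideanSpace ℝ (Fin 3)))).SSameSide v₅ v₁) :
    v₁ ∈ interior (convexHull ℝ ({v₂, v₃, v₄, v₅} : Set (EuclideanSpace ℝ (Fin 3)))) := by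
  classical
  have hcard : Fintype.card (Fin 4) = Module.finrank ℝ (EuclideanSpace ℝ (Fin 3)) + 1 := by
    simp [finrank_euclideanSpace]
  have htopB : affineSpan ℝ (Set.range ![v₁, v₂, v₃, v₄]) = ⊤ :=
    h₁₂₃₄.affineSpan_eq_top_iff_card_eq_finrank_add_one.mpr hcard
  have htopC : affineSpan ℝ (Set.range ![v₂, v₃, v₄, v₅]) = ⊤ :=
    h₂₃₄₅.affineSpan_eq_top_iff_card_eq_finrank_add_one.mpr hcard
  set B : AffineBasis (Fin 4) ℝ (EuclideanSpace ℝ (Fin 3)) := ⟨![v₁, v₂, v₃, v₄], h₁₂₃₄, htopB⟩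
    with hBdef
  set C : AffineBasis (Fin 4) ℝ (EuclideanSpace ℝ (Fin 3)) := ⟨![v₂, v₃, v₄, v₅], h₂₃₄₅, htopC⟩
    with hCdef
  have hBpt : ∀ j, B j = ![v₁, v₂, v₃, v₄] j := fun j => rfl
  have hCpt : ∀ j, C j = ![v₂, v₃, v₄, v₅] j := fun j => rfl
  set α := B.coord 0 v₅ with hα
  set β := B.coord 1 v₅ with hβ
  set γ := B.coord 2 v₅ with hγ
  set δ := B.coord 3 v₅ with hδ
  -- planes as zero loci
  have himg : ∀ i : Fin 4, ⇑B '' {j | j ≠ i} =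
      (fun S : Finset (Fin 4) => (fun j => ![v₁, v₂, v₃, v₄] j) '' S) (univ.erase i) := by
    intro i; ext x
    simp [Finset.mem_erase, hBpt]
  -- the four membership characterizations
  have hmA : ∀ z, z ∈ affineSpan ℝ ({v₁, v₂, v₃} : Set (EuclideanSpace ℝ (Fin 3))) ↔
      B.coord 3 z = 0 := by
    intro z
    rw [← mem_span_iff_coord_zero B 3 z]
    congr! 1
    apply congrArg
    ext x
    constructor
    · rintro (rfl | rfl | rfl)
      exacts [⟨0, by decide, rfl⟩, ⟨1, by decide, rfl⟩, ⟨2, by decide, rfl⟩]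
    · rintro ⟨j, hj, rfl⟩
      fin_cases j
      · exact Or.inl rfl
      · exact Or.inr (Or.inl rfl)
      · exact Or.inr (Or.inr rfl)
      · exact absurd rfl hj
  have hmB : ∀ z, z ∈ affineSpan ℝ ({v₁, v₂, v₄} : Set (EuclideanSpace ℝ (Fin 3))) ↔
      B.coord 2 z = 0 := by
    intro z
    rw [← mem_span_iff_coord_zero B 2 z]
    congr! 1
    apply congrArg
    ext x
    constructor
    · rintro (rfl | rfl | rfl)
      exacts [⟨0, by decide, rfl⟩, ⟨1, by decide, rfl⟩, ⟨3, by decide, rfl⟩]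
    · rintro ⟨j, hj, rfl⟩
      fin_cases j
      · exact Or.inl rfl
      · exact Or.inr (Or.inl rfl)
      · exact absurd rfl hj
      · exact Or.inr (Or.inr rfl)
  have hmC : ∀ z, z ∈ affineSpan ℝ ({v₁, v₃, v₄} : Set (EuclideanSpace ℝ (Fin 3))) ↔
      B.coord 1 z = 0 := by
    intro z
    rw [← mem_span_iff_coord_zero B 1 z]
    congr! 1
    apply congrArg
    ext x
    constructor
    · rintro (rfl | rfl | rfl)
      exacts [⟨0, by decide, rfl⟩, ⟨2, by decide, rfl⟩, ⟨3, by decide, rfl⟩]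
    · rintro ⟨j, hj, rfl⟩
      fin_cases j
      · exact Or.inl rfl
      · exact absurd rfl hj
      · exact Or.inr (Or.inl rfl)
      · exact Or.inr (Or.inr rfl)
  have hmD : ∀ z, z ∈ affineSpan ℝ ({v₂, v₃, v₄} : Set (EuclideanSpace ℝ (Fin 3))) ↔
      B.coord 0 z = 0 := by
    intro z
    rw [← mem_span_iff_coord_zero B 0 z]
    congr! 1
    apply congrArg
    ext x
    constructor
    · rintro (rfl | rfl | rfl)
      exacts [⟨1, by decide, rfl⟩, ⟨2, by decide, rfl⟩, ⟨3, by decide, rfl⟩]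
    · rintro ⟨j, hj, rfl⟩
      fin_cases j
      · exact absurd rfl hj
      · exact Or.inl rfl
      · exact Or.inr (Or.inl rfl)
      · exact Or.inr (Or.inr rfl)
  -- values of coords at basis points
  have hc3v4 : B.coord 3 v₄ = 1 := B.coord_apply_eq 3
  have hc2v3 : B.coord 2 v₃ = 1 := B.coord_apply_eq 2
  have hc1v2 : B.coord 1 v₂ = 1 := B.coord_apply_eq 1
  have hc0v1 : B.coord 0 v₁ = 1 := B.coord_apply_eq 0
  -- signs
  have hδneg : δ < 0 := by have := sOppSide_sign hmA hA; rw [hc3v4] at this; linarith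
  have hγneg : γ < 0 := by have := sOppSide_sign hmB hB; rw [hc2v3] at this; linarith
  have hβneg : β < 0 := by have := sOppSide_sign hmC hC; rw [hc1v2] at this; linarith
  have hαpos : 0 < α := by have := sSameSide_sign hmD hD; rw [hc0v1] at this; linarith
  -- barycentric expansion of v₅
  have hsum : α + β + γ + δ = 1 := by
    have := B.sum_coord_apply_eq_one v₅
    rwa [Fin.sum_univ_four] at this
  have hv₅ : v₅ = α • v₁ + β • v₂ + γ • v₃ + δ • v₄ := by
    have h1 := B.affineCombination_coord_eq_self v₅
    rw [Finset.univ.affineCombination_eq_linear_combination _ _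
      (B.sum_coord_apply_eq_one v₅), Fin.sum_univ_four] at h1
    simpa [hBpt] using h1.symm
  -- weights of v₁ in basis C
  set w : Fin 4 → ℝ := ![-β / α, -γ / α, -δ / α, 1 / α] with hw
  have hαne : α ≠ 0 := ne_of_gt hαpos
  have hwsum : ∑ j, w j = 1 := by
    rw [Fin.sum_univ_four]
    show -β / α + -γ / α + -δ / α + 1 / α = 1
    rw [← add_div, ← add_div, ← add_div, div_eq_one_iff_eq hαne]
    linarith
  have hcomb : Finset.univ.affineCombination ℝ (⇑C) w = v₁ := by
    rw [Finset.univ.affineCombination_eq_linear_combination _ _ hwsum, Fin.sum_univ_four]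
    show (-β / α) • v₂ + (-γ / α) • v₃ + (-δ / α) • v₄ + (1 / α) • v₅ = v₁
    rw [hv₅]
    match_scalars <;> field_simp <;> ring
  have hcoord : ∀ i, C.coord i v₁ = w i := by
    intro i
    rw [← hcomb, C.coord_apply_combination_of_mem (Finset.mem_univ i) hwsum]
  have hrangeC : ({v₂, v₃, v₄, v₅} : Set (EuclideanSpace ℝ (Fin 3))) = Set.range ⇑C := by
    show _ = Set.range ![v₂, v₃, v₄, v₅]
    rw [Matrix.range_cons, Matrix.range_cons, Matrix.range_cons, Matrix.range_cons_empty]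
    ext x
    simp only [Set.mem_insert_iff, Set.mem_union, Set.mem_singleton_iff]
  rw [hrangeC, C.interior_convexHull]
  intro i
  rw [hcoord i]
  fin_cases i
  · show (0:ℝ) < -β / α
    exact div_pos (by linarith) hαpos
  · show (0:ℝ) < -γ / α
    exact div_pos (by linarith) hαpos
  · show (0:ℝ) < -δ / α
    exact div_pos (by linarith) hαpos
  · show (0:ℝ) < 1 / α
    exact div_pos one_pos hαpos
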